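/- arXiv:2110.00614 — 2 statements merged into one kernel-verified Lean document; each statement's English description precedes it below -/
import Mathlib

section
/- Let p be a prime, k a perfect field of characteristic p, and n ≥ 1. On V = kⁿ consider the pairing ⟨v,w⟩ := Σ_{i=1}^n v_i · (w_{n+1−i})^p. Then for every k-subspace U ⊆ V one has (U^#)^# = τ(U), where U^# := {x ∈ V : ⟨x,u⟩ = 0 for all u ∈ U} and τ : V → V raises every coordinate to the power p². -/
/-- The pairing `⟨v,w⟩ = Σ_{i=1}^n v_i · (w_{n+1−i})^p` on `kⁿ`. -/
def pairingP (p : ℕ) {k : Type*} [Field k] {n : ℕ} (v w : Fin n → k) : k :=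
  ∑ i : Fin n, v i * (w i.rev) ^ p

/-- For a set `S ⊆ kⁿ`, its orthogonal `S^# = {x ∈ kⁿ : ⟨x,u⟩ = 0 for all u ∈ S}`. -/
def sharpSet (p : ℕ) {k : Type*} [Field k] {n : ℕ} (S : Set (Fin n → k)) :
    Set (Fin n → k) :=
  {x | ∀ u ∈ S, pairingP p x u = 0}

section Aux

variable (p : ℕ) {k : Type*} [Field k] {n : ℕ}

/-- The bilinear form `B v w = ∑ i, v i * w (rev i)`. -/
noncomputable def Bform (k : Type*) [Field k] (n : ℕ) :
    LinearMap.BilinForm k (Fin n → k) :=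
  LinearMap.mk₂ k (fun v w => ∑ i : Fin n, v i * w i.rev)
    (fun v v' w => by simp [add_mul, Finset.sum_add_distrib])
    (fun a v w => by simp [Finset.mul_sum, mul_assoc])
    (fun v w w' => by simp [mul_add, Finset.sum_add_distrib])
    (fun a v w => by simp [Finset.mul_sum, mul_left_comm])

lemma Bform_apply (v w : Fin n → k) :
    Bform k n v w = ∑ i : Fin n, v i * w i.rev := rfl

lemma Bform_symm (v w : Fin n → k) : Bform k n v w = Bform k n w v := by
  rw [Bform_apply, Bform_apply]
  exact Fintype.sum_equiv (Fin.revPerm) _ _ (fun i => by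
    simp [mul_comm])

lemma Bform_refl : (Bform k n).IsRefl := fun v w h => by
  rwa [Bform_symm]

lemma Bform_nondeg : (Bform k n).Nondegenerate := by
  have hL : LinearMap.SeparatingLeft (Bform k n) := by
    intro v hv
    funext j
    have := hv (Pi.single j.rev 1)
    rw [Bform_apply] at this
    simpa [Pi.single_apply, Fin.rev_inj, mul_ite] using this
  exact ⟨hL, fun w hw => hL w fun v => by rw [Bform_symm]; exact hw v⟩

variable [ExpChar k p] [PerfectRing k p]

/-- Coordinatewise Frobenius. -/
def Fr (v : Fin n → k) : Fin n → k := fun i => (v i) ^ p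

/-- Coordinatewise inverse Frobenius. -/
noncomputable def FrInv (v : Fin n → k) : Fin n → k :=
  fun i => (frobeniusEquiv k p).symm (v i)

lemma Fr_FrInv (v : Fin n → k) : Fr p (FrInv p v) = v := by
  funext i; exact frobeniusEquiv_symm_pow_p k p (v i)

lemma FrInv_Fr (v : Fin n → k) : FrInv p (Fr p v) = v := by
  funext i
  exact frobeniusEquiv_symm_apply_frobenius k p (v i)

lemma mem_Fr_image_iff {S : Set (Fin n → k)} {x : Fin n → k} :
    x ∈ Fr p '' S ↔ FrInv p x ∈ S := by
  constructor
  · rintro ⟨y, hy, rfl⟩; rwa [FrInv_Fr]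
  · intro h; exact ⟨FrInv p x, h, Fr_FrInv p x⟩

/-- Core computation: `∑ x i * (w (rev i))^p = (B (Fr⁻¹ x) w)^p`. -/
lemma core (x w : Fin n → k) :
    ∑ i : Fin n, x i * (w i.rev) ^ p = (Bform k n (FrInv p x) w) ^ p := by
  rw [Bform_apply, ← frobenius_def, map_sum]
  refine Finset.sum_congr rfl fun i _ => ?_
  rw [frobenius_def, mul_pow, FrInv, frobeniusEquiv_symm_pow_p]

lemma pairingP_eq (x u : Fin n → k) :
    pairingP p x u = (Bform k n (FrInv p x) u) ^ p := core p x u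

lemma Bform_Fr (y w : Fin n → k) :
    Bform k n y (Fr p w) = (Bform k n (FrInv p y) w) ^ p := by
  rw [Bform_apply]
  exact core p y w

variable (hp : p.Prime)
include hp

lemma pairingP_eq_zero_iff (x u : Fin n → k) :
    pairingP p x u = 0 ↔ Bform k n (FrInv p x) u = 0 := by
  rw [pairingP_eq, pow_eq_zero_iff hp.ne_zero]

lemma Bform_Fr_eq_zero_iff (y w : Fin n → k) :
    Bform k n y (Fr p w) = 0 ↔ Bform k n (FrInv p y) w = 0 := by
  rw [Bform_Fr, pow_eq_zero_iff hp.ne_zero]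

lemma sharpSet_eq (S : Set (Fin n → k)) :
    sharpSet p S = Fr p '' {y | ∀ u ∈ S, Bform k n y u = 0} := by
  ext x
  rw [mem_Fr_image_iff]
  exact forall₂_congr fun u hu => pairingP_eq_zero_iff p hp x u

omit [ExpChar k p] [PerfectRing k p] hp in
lemma orth_coe (U : Submodule k (Fin n → k)) :
    {y | ∀ u ∈ (U : Set (Fin n → k)), Bform k n y u = 0} =
      ((Bform k n).orthogonal U : Set (Fin n → k)) := by
  ext y
  simp only [Set.mem_setOf_eq, SetLike.mem_coe, LinearMap.BilinForm.mem_orthogonal_iff]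
  exact forall₂_congr fun u _ => by rw [Bform_symm]

lemma orth_Fr_image (W : Submodule k (Fin n → k)) :
    {y | ∀ u ∈ Fr p '' (W : Set (Fin n → k)), Bform k n y u = 0} =
      Fr p '' {y | ∀ u ∈ (W : Set (Fin n → k)), Bform k n y u = 0} := by
  ext y
  rw [mem_Fr_image_iff]
  simp only [Set.mem_setOf_eq, Set.forall_mem_image]
  exact forall₂_congr fun w _ => Bform_Fr_eq_zero_iff p hp y w

end Aux

/-- for `k` a perfect field of characteristic `p` and `U` a `k`-subspace of
`V = kⁿ`, one has `(U^#)^# = τ(U)`, where `τ` raises every coordinate to the power `p²`. -/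
theorem statement14 (p : ℕ) (hp : p.Prime) (k : Type*) [Field k] [CharP k p]
    [ExpChar k p] [PerfectRing k p] (n : ℕ) (hn : 1 ≤ n)
    (U : Submodule k (Fin n → k)) :
    sharpSet p (sharpSet p (U : Set (Fin n → k))) =
      (fun v : Fin n → k => fun i => (v i) ^ (p ^ 2)) '' (U : Set (Fin n → k)) := by
  have h1 : sharpSet p (U : Set (Fin n → k)) =
      Fr p '' ((Bform k n).orthogonal U : Set (Fin n → k)) :=
    (sharpSet_eq p hp _).trans (congrArg (Set.image (Fr p)) (orth_coe U))
  have h2 : sharpSet p (Fr p '' ((Bform k n).orthogonal U : Set (Fin n → k))) =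
      Fr p '' (Fr p '' (((Bform k n).orthogonal ((Bform k n).orthogonal U)) :
        Set (Fin n → k))) :=
    (sharpSet_eq p hp _).trans (congrArg (Set.image (Fr p))
      ((orth_Fr_image p hp _).trans
        (congrArg (Set.image (Fr p)) (orth_coe _))))
  rw [h1, h2, LinearMap.BilinForm.orthogonal_orthogonal Bform_nondeg Bform_refl,
    ← Set.image_comp]
  refine Set.image_congr fun v _ => ?_
  funext i
  simp [Fr, Function.comp, ← pow_mul, pow_two]
end

section
/- Let p be a prime, k a perfect field of characteristic p, n ≥ 1, V = kⁿ, and let τ : V → V be the bijection raising every coordinate to the power p². Suppose F₁ ⊆ F₂ ⊆ … ⊆ F_r are k-subspaces of V such that τ(F_i) = F_{i−1} + τ(F_{i−1}) for all 2 ≤ i ≤ r. Then F_i = Σ_{l=0}^{i−1} τ^{−l}(F₁) for all 1 ≤ i ≤ r, where τ^{−l}(F₁) denotes the preimage of F₁ under the l-fold iterate of τ. In particular, the flag (F₁, …, F_r) is completely determined by the subspace F₁. -/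
open Pointwise

section Aux

variable {V : Type*}

lemma aux_subset_add_right [AddZeroClass V] {X Y : Set V} (h : (0:V) ∈ Y) : X ⊆ X + Y :=
  fun x hx => by simpa using Set.add_mem_add hx h

lemma aux_subset_add_left [AddZeroClass V] {X Y : Set V} (h : (0:V) ∈ Y) : X ⊆ Y + X :=
  fun x hx => by simpa using Set.add_mem_add h hx

lemma aux_zero_mem_sum [AddCommMonoid V] {ι : Type*} (s : Finset ι)
    (g : ι → Set V) (h : ∀ l ∈ s, (0:V) ∈ g l) : (0:V) ∈ ∑ l ∈ s, g l := by
  classical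
  induction s using Finset.induction with
  | empty => simp
  | @insert a s hmem ih =>
    rw [Finset.sum_insert hmem]
    have := Set.add_mem_add (h a (Finset.mem_insert_self _ _))
      (ih (fun l hl => h l (Finset.mem_insert_of_mem hl)))
    simpa using this

lemma aux_sum_subset_sum [AddCommMonoid V] {ι : Type*} (s : Finset ι)
    (g h : ι → Set V) (hsub : ∀ l ∈ s, g l ⊆ h l) :
    ∑ l ∈ s, g l ⊆ ∑ l ∈ s, h l := by
  classical
  induction s using Finset.induction with
  | empty => simp
  | @insert a s hmem ih =>
    rw [Finset.sum_insert hmem, Finset.sum_insert hmem]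
    exact Set.add_subset_add (hsub a (Finset.mem_insert_self _ _))
      (ih (fun l hl => hsub l (Finset.mem_insert_of_mem hl)))

lemma aux_preimage_add [AddCommGroup V] {f : V → V}
    (hadd : ∀ x y, f (x + y) = f x + f y) (hbij : Function.Bijective f)
    (A B : Set V) : f ⁻¹' (A + B) = f ⁻¹' A + f ⁻¹' B := by
  ext x
  simp only [Set.mem_preimage, Set.mem_add]
  constructor
  · rintro ⟨a, ha, b, hb, hab⟩
    obtain ⟨a', rfl⟩ := hbij.2 a
    obtain ⟨b', rfl⟩ := hbij.2 b
    exact ⟨a', ha, b', hb, hbij.1 (by rw [hadd, hab])⟩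
  · rintro ⟨a, ha, b, hb, rfl⟩
    exact ⟨f a, ha, f b, hb, (hadd a b).symm⟩

lemma aux_map_zero [AddCommGroup V] {f : V → V}
    (hadd : ∀ x y, f (x + y) = f x + f y) : f 0 = 0 := by
  have := hadd 0 0
  rw [add_zero] at this
  exact (left_eq_add.mp this)

lemma aux_preimage_sum [AddCommGroup V] {f : V → V}
    (hadd : ∀ x y, f (x + y) = f x + f y) (hbij : Function.Bijective f)
    {ι : Type*} (s : Finset ι) (g : ι → Set V) :
    f ⁻¹' (∑ l ∈ s, g l) = ∑ l ∈ s, f ⁻¹' (g l) := by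
  classical
  have hf0 : f 0 = 0 := aux_map_zero hadd
  induction s using Finset.induction with
  | empty =>
    simp only [Finset.sum_empty]
    ext x
    simp only [Set.mem_preimage, Set.mem_zero]
    constructor
    · intro h; exact hbij.1 (h.trans hf0.symm)
    · rintro rfl; exact hf0
  | @insert a s hmem ih =>
    rw [Finset.sum_insert hmem, Finset.sum_insert hmem,
      aux_preimage_add hadd hbij, ih]

lemma aux_iter_add [AddCommMonoid V] {f : V → V}
    (hadd : ∀ x y, f (x + y) = f x + f y) (l : ℕ) (x y : V) :
    f^[l] (x + y) = f^[l] x + f^[l] y := by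
  induction l generalizing x y with
  | zero => simp
  | succ m ih => simp only [Function.iterate_succ_apply, hadd, ih]

lemma aux_iter_zero [AddCommGroup V] {f : V → V}
    (hadd : ∀ x y, f (x + y) = f x + f y) (l : ℕ) : f^[l] 0 = 0 := by
  induction l with
  | zero => simp
  | succ m ih => rw [Function.iterate_succ_apply, aux_map_zero hadd, ih]

end Aux

/-- Statement 15: let `k` be a perfect field of characteristic `p`, `V = kⁿ`, and
`τ : V → V` the bijection raising every coordinate to the power `p²`.  If
`F₁ ⊆ F₂ ⊆ … ⊆ F_r` are `k`-subspaces of `V` with `τ(F_i) = F_{i−1} + τ(F_{i−1})` for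
all `2 ≤ i ≤ r`, then `F_i = Σ_{l=0}^{i−1} τ^{−l}(F₁)` for all `1 ≤ i ≤ r`; in
particular, the flag is completely determined by `F₁`. -/
theorem statement15 (p : ℕ) (hp : p.Prime) (k : Type*) [Field k] [CharP k p]
    [ExpChar k p] [PerfectRing k p] (n r : ℕ) (hn : 1 ≤ n)
    (F : ℕ → Submodule k (Fin n → k))
    (τ : (Fin n → k) → (Fin n → k))
    (hτ : τ = fun v : Fin n → k => fun i => (v i) ^ (p ^ 2))
    (hmono : ∀ i, 1 ≤ i → i < r → F i ≤ F (i + 1))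
    (hrec : ∀ i, 2 ≤ i → i ≤ r →
      τ '' (F i : Set (Fin n → k)) =
        (F (i - 1) : Set (Fin n → k)) + τ '' (F (i - 1) : Set (Fin n → k))) :
    ∀ i, 1 ≤ i → i ≤ r →
      (F i : Set (Fin n → k)) =
        ∑ l ∈ Finset.range i, (τ^[l]) ⁻¹' (F 1 : Set (Fin n → k)) := by
  have hadd : ∀ x y : Fin n → k, τ (x + y) = τ x + τ y := by
    intro x y
    funext i
    simp only [hτ, Pi.add_apply]
    exact add_pow_expChar_pow ..
  have hbij : Function.Bijective τ := by
    have : τ = ⇑(Equiv.piCongrRight fun _ : Fin n => (iterateFrobeniusEquiv k p 2).toEquiv) := by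
      funext v
      funext i
      simp [hτ, Equiv.piCongrRight, iterateFrobeniusEquiv_def, iterateFrobenius_def]
    rw [this]
    exact (Equiv.piCongrRight _).bijective
  set S : ℕ → Set (Fin n → k) := fun l => (τ^[l]) ⁻¹' (F 1 : Set (Fin n → k)) with hS
  have hS0 : ∀ l, (0 : Fin n → k) ∈ S l := by
    intro l
    simp only [hS, Set.mem_preimage, aux_iter_zero hadd l]
    exact (F 1).zero_mem
  have hSadd : ∀ l, S l + S l ⊆ S l := by
    intro l x hx
    rw [Set.mem_add] at hx
    obtain ⟨a, ha, b, hb, rfl⟩ := hx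
    simp only [hS, Set.mem_preimage, aux_iter_add hadd] at *
    exact (F 1).add_mem ha hb
  have hSpre : ∀ l, τ ⁻¹' (S l) = S (l + 1) := by
    intro l
    simp only [hS, ← Set.preimage_comp, ← Function.iterate_succ]
  intro i hi1
  induction i, hi1 using Nat.le_induction with
  | base =>
    intro _
    rw [Finset.sum_range_one]
    simp [hS]
  | succ m hm ih =>
    intro hir
    have hFm : (F m : Set (Fin n → k)) = ∑ l ∈ Finset.range m, S l := ih (by omega)
    have hrec' := hrec (m + 1) (by omega) hir
    simp only [Nat.add_sub_cancel] at hrec'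
    have hF : (F (m + 1) : Set (Fin n → k)) =
        (∑ l ∈ Finset.range m, S (l + 1)) + ∑ l ∈ Finset.range m, S l := by
      have h1 : (F (m + 1) : Set (Fin n → k)) = τ ⁻¹' ((F m : Set (Fin n → k)) + τ '' (F m : Set (Fin n → k))) := by
        rw [← hrec', Set.preimage_image_eq _ hbij.1]
      rw [h1, aux_preimage_add hadd hbij, Set.preimage_image_eq _ hbij.1, hFm,
        aux_preimage_sum hadd hbij]
      congr 1
    rw [hF]
    set A : Set (Fin n → k) := ∑ l ∈ Finset.range m, S (l + 1) with hA
    set B : Set (Fin n → k) := ∑ l ∈ Finset.range m, S l with hB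
    set T : Set (Fin n → k) := ∑ l ∈ Finset.range (m + 1), S l with hT
    have hTA : T = A + S 0 := by
      rw [hT, hA, Finset.sum_range_succ']
    have hAT : A ⊆ T := by
      rw [hTA]; exact aux_subset_add_right (hS0 0)
    have hBT : B ⊆ T := by
      rw [hT, Finset.sum_range_succ]; exact aux_subset_add_right (hS0 m)
    have hTT : T + T ⊆ T := by
      rw [hT, ← Finset.sum_add_distrib]
      exact aux_sum_subset_sum _ _ _ fun l _ => hSadd l
    have hS0B : S 0 ⊆ B := by
      obtain ⟨t, rfl⟩ : ∃ t, m = t + 1 := ⟨m - 1, by omega⟩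
      rw [hB, Finset.sum_range_succ']
      exact aux_subset_add_left (aux_zero_mem_sum _ _ fun l _ => hS0 (l + 1))
    apply subset_antisymm
    · exact (Set.add_subset_add hAT hBT).trans hTT
    · rw [hTA]
      exact Set.add_subset_add_left hS0B
end
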